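/- Let h ≥ 1 and p ≥ 2 be integers, i ∈ {1,…,p}, and δ, τ, φ ∈ (0,1) real numbers with τ ≥ 2^{−h}. Let 𝒜, ℬ be finite nonempty sets and g : 𝒜 × ℬ → {0,1} a function which has (δ,h)-hitting monochromatic rectangle-distributions. Suppose A ⊆ 𝒜^p and B ⊆ ℬ^p are nonempty, A and B are each τ-thick, and |A|/|A_{≠i}| ≤ φ·|𝒜|. Then for each c ∈ {0,1} there exist U ⊆ 𝒜 and V ⊆ ℬ such that g(u,v) = c for all (u,v) ∈ U × V, and: (1) A^{i,U}_{≠i} and B^{i,V}_{≠i} are each τ-thick; (2) |A^{i,U}_{≠i}|/|𝒜|^{p−1} ≥ (1/φ)·(1 − 3δ)·|A|/|𝒜|^p; (3) |B^{i,V}_{≠i}|/|ℬ|^{p−1} ≥ (1 − 3δ)·|B|/|ℬ|^p. -/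

import Mathlib

open Finset

/-- Insert the value `s` at coordinate `i` into the partial tuple `a'`. -/
def insNe {𝒜 : Type*} {ι : Type*} [DecidableEq ι]
    (i : ι) (a' : {j : ι // j ≠ i} → 𝒜) (s : 𝒜) : ι → 𝒜 :=
  fun j => if h : j = i then s else a' ⟨j, h⟩

/-- Projection of `A ⊆ 𝒜^ι` onto the coordinates other than `i`. -/
def projNe {𝒜 : Type*} {ι : Type*} [DecidableEq ι] [Fintype ι] [DecidableEq 𝒜]
    (A : Finset (ι → 𝒜)) (i : ι) : Finset ({j : ι // j ≠ i} → 𝒜) :=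
  A.image fun a => fun j => a j.1

/-- The set of extensions of `a'` at coordinate `i`:  those `s ∈ 𝒜` such that
inserting `s` at coordinate `i` into `a'` gives an element of `A`. -/
def extNe {𝒜 : Type*} {ι : Type*} [DecidableEq ι] [Fintype ι] [Fintype 𝒜] [DecidableEq 𝒜]
    (A : Finset (ι → 𝒜)) (i : ι) (a' : {j : ι // j ≠ i} → 𝒜) : Finset 𝒜 :=
  Finset.univ.filter fun s => insNe i a' s ∈ A

/-- `A` is `τ`-thick: every element of the projection of `A` away from any
coordinate `i` has at least `τ·|𝒜|` extensions at coordinate `i`. -/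
def Thick {𝒜 : Type*} {ι : Type*} [DecidableEq ι] [Fintype ι] [Fintype 𝒜] [DecidableEq 𝒜]
    (τ : ℝ) (A : Finset (ι → 𝒜)) : Prop :=
  ∀ (i : ι) (a' : {j : ι // j ≠ i} → 𝒜), a' ∈ projNe A i →
    τ * (Fintype.card 𝒜 : ℝ) ≤ ((extNe A i a').card : ℝ)


/-- A probability distribution over (combinatorial) rectangles `U × V` with
`U ⊆ α` and `V ⊆ β`. -/
structure RectDist (α β : Type*) [Fintype α] [Fintype β] where
  prob : Finset α × Finset β → ℝ
  nonneg : ∀ R, 0 ≤ prob R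
  sum_one : ∑ R, prob R = 1

open Classical in
/-- The probability, under `σ`, that a sampled rectangle satisfies `P`. -/
noncomputable def rectProb {α β : Type*} [Fintype α] [Fintype β]
    (σ : RectDist α β) (P : Finset α × Finset β → Prop) : ℝ :=
  ∑ R, if P R then σ.prob R else 0

/-- `σ` is a `(δ, h)`-hitting rectangle-distribution: every rectangle `A × B`
with `|A| ≥ 2^{-h}|α|` and `|B| ≥ 2^{-h}|β|` is hit with probability `≥ 1 - δ`. -/
def IsHitting {α β : Type*} [Fintype α] [Fintype β] [DecidableEq α] [DecidableEq β]
    (σ : RectDist α β) (δ : ℝ) (h : ℕ) : Prop :=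
  ∀ (A : Finset α) (B : Finset β),
    (2:ℝ)^(-(h:ℝ)) * (Fintype.card α : ℝ) ≤ (A.card : ℝ) →
    (2:ℝ)^(-(h:ℝ)) * (Fintype.card β : ℝ) ≤ (B.card : ℝ) →
    1 - δ ≤ rectProb σ (fun R => ((R.1 ×ˢ R.2) ∩ (A ×ˢ B)).Nonempty)

/-- `g` has `(δ, h)`-hitting monochromatic rectangle-distributions: for each
`c ∈ {0,1}` there is a `(δ,h)`-hitting distribution supported on
`c`-monochromatic rectangles of `g`. -/
def HasHittingMonoDists {α β : Type*} [Fintype α] [Fintype β] [DecidableEq α] [DecidableEq β]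
    (g : α → β → Bool) (δ : ℝ) (h : ℕ) : Prop :=
  ∀ c : Bool, ∃ σ : RectDist α β, IsHitting σ δ h ∧
    ∀ R, σ.prob R ≠ 0 → ∀ u ∈ R.1, ∀ v ∈ R.2, g u v = c

section aux
variable {𝒜 : Type*} {ι : Type*} [DecidableEq ι] [Fintype ι] [Fintype 𝒜] [DecidableEq 𝒜]

lemma insNe_proj (i : ι) (a : ι → 𝒜) : insNe i (fun j => a j.1) (a i) = a := by
  funext j
  by_cases hj : j = i
  · subst hj; simp [insNe]
  · simp [insNe, hj]

lemma proj_insNe (i : ι) (a' : {j : ι // j ≠ i} → 𝒜) (s : 𝒜) :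
    (fun j : {j : ι // j ≠ i} => insNe i a' s j.1) = a' := by
  funext j
  simp [insNe, j.2]

lemma projNe_filter_eq (A : Finset (ι → 𝒜)) (i : ι) (U : Finset 𝒜)
    [DecidablePred fun a' : {j : ι // j ≠ i} → 𝒜 => (U ∩ extNe A i a').Nonempty] :
    projNe (A.filter fun a => a i ∈ U) i
      = (projNe A i).filter fun a' => (U ∩ extNe A i a').Nonempty := by
  ext a'
  simp only [projNe, Finset.mem_image, Finset.mem_filter]
  constructor
  · rintro ⟨a, ha, rfl⟩
    refine ⟨⟨a, ha.1, rfl⟩, ⟨a i, ?_⟩⟩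
    rw [Finset.mem_inter]
    refine ⟨ha.2, ?_⟩
    simp only [extNe, Finset.mem_filter, Finset.mem_univ, true_and]
    rw [insNe_proj]; exact ha.1
  · rintro ⟨⟨a, ha, rfl⟩, s, hs⟩
    rw [Finset.mem_inter] at hs
    have hsA : insNe i (fun j => a j.1) s ∈ A := by
      have := hs.2; simpa [extNe] using this
    refine ⟨insNe i (fun j => a j.1) s, ?_, ?_⟩
    · refine ⟨hsA, ?_⟩
      simpa [insNe] using hs.1
    · exact proj_insNe i _ s

lemma thick_proj_filter {τ : ℝ} {A : Finset (ι → 𝒜)} (hA : Thick τ A) (i : ι) (U : Finset 𝒜) :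
    Thick τ (projNe (A.filter fun a => a i ∈ U) i) := by
  intro j0 a'' ha''
  simp only [projNe, Finset.mem_image] at ha''
  obtain ⟨a', ha', rfl⟩ := ha''
  obtain ⟨a, ha, rfl⟩ := ha'
  rw [Finset.mem_filter] at ha
  have hij0 : (i : ι) ≠ j0.1 := Ne.symm j0.2
  have hsub : extNe A j0.1 (fun m => a m.1)
      ⊆ extNe (projNe (A.filter fun a => a i ∈ U) i) j0
          (fun k => (fun j : {j : ι // j ≠ i} => a j.1) k.1) := by
    intro s hs
    have hsA : insNe j0.1 (fun m => a m.1) s ∈ A := by simpa [extNe] using hs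
    have hbi : insNe (j0.1) (fun m : {j : ι // j ≠ j0.1} => a m.1) s i = a i := by
      simp [insNe, hij0]
    have hbC : insNe j0.1 (fun m => a m.1) s ∈ A.filter (fun a => a i ∈ U) :=
      Finset.mem_filter.mpr ⟨hsA, by rw [hbi]; exact ha.2⟩
    have hproj : (fun k : {j : ι // j ≠ i} => insNe j0.1 (fun m => a m.1) s k.1)
        = insNe j0 (fun k => (fun j : {j : ι // j ≠ i} => a j.1) k.1) s := by
      funext k
      by_cases hk : k = j0
      · subst hk; simp [insNe]
      · have hk1 : k.1 ≠ j0.1 := fun hh => hk (Subtype.ext hh)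
        simp [insNe, hk1, hk]
    simp only [extNe, Finset.mem_filter, Finset.mem_univ, true_and]
    rw [← hproj]
    exact Finset.mem_image_of_mem _ hbC
  calc τ * (Fintype.card 𝒜 : ℝ) ≤ ((extNe A j0.1 (fun m => a m.1)).card : ℝ) := by
        apply hA
        simp only [projNe, Finset.mem_image]
        exact ⟨a, ha.1, rfl⟩
    _ ≤ _ := by exact_mod_cast Finset.card_le_card hsub

lemma card_le_projNe_mul (A : Finset (ι → 𝒜)) (i : ι) :
    A.card ≤ (projNe A i).card * Fintype.card 𝒜 := by
  classical
  have h := Finset.card_le_card_of_injOn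
    (f := fun a : ι → 𝒜 => ((fun j : {j : ι // j ≠ i} => a j.1), a i))
    (s := A) (t := (projNe A i) ×ˢ Finset.univ) ?_ ?_
  · simpa [Finset.card_product] using h
  · intro a ha
    simp only [Finset.mem_coe, Finset.mem_product, Finset.mem_univ, and_true, projNe, Finset.mem_image]
    exact ⟨a, ha, rfl⟩
  · intro a1 h1 a2 h2 heq
    have h1' : (fun j : {j : ι // j ≠ i} => a1 j.1) = fun j => a2 j.1 := congrArg Prod.fst heq
    have h2' : a1 i = a2 i := congrArg Prod.snd heq
    calc a1 = insNe i (fun j => a1 j.1) (a1 i) := (insNe_proj i a1).symm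
      _ = insNe i (fun j => a2 j.1) (a2 i) := by rw [h1', h2']
      _ = a2 := insNe_proj i a2

end aux

lemma rectProb_mono {α β : Type*} [Fintype α] [Fintype β] (σ : RectDist α β)
    {P Q : Finset α × Finset β → Prop} (h : ∀ R, P R → Q R) :
    rectProb σ P ≤ rectProb σ Q := by
  unfold rectProb
  refine Finset.sum_le_sum fun R _ => ?_
  by_cases hP : P R
  · simp [hP, h R hP]
  · simp only [hP, if_false]
    split_ifs
    · exact σ.nonneg R
    · exact le_rfl

/-- projection lemma. -/
theorem projection_lemma
    {𝒜 ℬ : Type*} [Fintype 𝒜] [DecidableEq 𝒜] [Nonempty 𝒜]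
    [Fintype ℬ] [DecidableEq ℬ] [Nonempty ℬ]
    {h p : ℕ} (hh : 1 ≤ h) (hp : 2 ≤ p) (i : Fin p)
    {δ τ φ : ℝ} (hδ0 : 0 < δ) (hδ1 : δ < 1) (hτ0 : 0 < τ) (hτ1 : τ < 1)
    (hφ0 : 0 < φ) (hφ1 : φ < 1) (hτh : (2:ℝ)^(-(h:ℝ)) ≤ τ)
    (g : 𝒜 → ℬ → Bool) (hg : HasHittingMonoDists g δ h)
    (A : Finset (Fin p → 𝒜)) (B : Finset (Fin p → ℬ))
    (hAne : A.Nonempty) (hBne : B.Nonempty)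
    (hAth : Thick τ A) (hBth : Thick τ B)
    (hdeg : (A.card : ℝ) / ((projNe A i).card : ℝ) ≤ φ * (Fintype.card 𝒜 : ℝ)) :
    ∀ c : Bool, ∃ (U : Finset 𝒜) (V : Finset ℬ),
      (∀ u ∈ U, ∀ v ∈ V, g u v = c) ∧
      Thick τ (projNe (A.filter fun a => a i ∈ U) i) ∧
      Thick τ (projNe (B.filter fun b => b i ∈ V) i) ∧
      (1/φ) * (1 - 3*δ) * ((A.card : ℝ) / (Fintype.card 𝒜 : ℝ)^p)
        ≤ ((projNe (A.filter fun a => a i ∈ U) i).card : ℝ) / (Fintype.card 𝒜 : ℝ)^(p-1) ∧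
      (1 - 3*δ) * ((B.card : ℝ) / (Fintype.card ℬ : ℝ)^p)
        ≤ ((projNe (B.filter fun b => b i ∈ V) i).card : ℝ) / (Fintype.card ℬ : ℝ)^(p-1) := by
  classical
  intro c
  obtain ⟨σ, hσhit, hσmono⟩ := hg c
  set A' := projNe A i with hA'def
  set B' := projNe B i with hB'def
  have hA'ne : A'.Nonempty := hAne.image _
  have hB'ne : B'.Nonempty := hBne.image _
  obtain ⟨a'0, ha'0⟩ := hA'ne
  obtain ⟨b'0, hb'0⟩ := hB'ne
  have cA0 : (0:ℝ) < (Fintype.card 𝒜 : ℝ) := by exact_mod_cast Fintype.card_pos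
  have cB0 : (0:ℝ) < (Fintype.card ℬ : ℝ) := by exact_mod_cast Fintype.card_pos
  have ha0 : (0:ℝ) < (A'.card : ℝ) := by
    exact_mod_cast Finset.card_pos.mpr ⟨a'0, ha'0⟩
  have hb0 : (0:ℝ) < (B'.card : ℝ) := by
    exact_mod_cast Finset.card_pos.mpr ⟨b'0, hb'0⟩
  have hextA : ∀ a' ∈ A', (2:ℝ)^(-(h:ℝ)) * (Fintype.card 𝒜 : ℝ) ≤ ((extNe A i a').card : ℝ) :=
    fun a' ha' => le_trans (mul_le_mul_of_nonneg_right hτh cA0.le) (hAth i a' ha')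
  have hextB : ∀ b' ∈ B', (2:ℝ)^(-(h:ℝ)) * (Fintype.card ℬ : ℝ) ≤ ((extNe B i b').card : ℝ) :=
    fun b' hb' => le_trans (mul_le_mul_of_nonneg_right hτh cB0.le) (hBth i b' hb')
  -- per-element hitting
  have hhitA : ∀ a' ∈ A', 1 - δ ≤ rectProb σ fun R => (R.1 ∩ extNe A i a').Nonempty := by
    intro a' ha'
    refine le_trans (hσhit (extNe A i a') (extNe B i b'0) (hextA a' ha') (hextB b'0 hb'0))
      (rectProb_mono σ ?_)
    rintro R ⟨⟨u, v⟩, hm⟩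
    simp only [Finset.mem_inter, Finset.mem_product] at hm
    exact ⟨u, Finset.mem_inter.mpr ⟨hm.1.1, hm.2.1⟩⟩
  have hhitB : ∀ b' ∈ B', 1 - δ ≤ rectProb σ fun R => (R.2 ∩ extNe B i b').Nonempty := by
    intro b' hb'
    refine le_trans (hσhit (extNe A i a'0) (extNe B i b') (hextA a'0 ha'0) (hextB b' hb'))
      (rectProb_mono σ ?_)
    rintro R ⟨⟨u, v⟩, hm⟩
    simp only [Finset.mem_inter, Finset.mem_product] at hm
    exact ⟨v, Finset.mem_inter.mpr ⟨hm.1.2, hm.2.2⟩⟩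
  set FA : Finset 𝒜 × Finset ℬ → ℝ :=
    fun R => ∑ a' ∈ A', if (R.1 ∩ extNe A i a').Nonempty then (1:ℝ) else 0 with hFAdef
  set FB : Finset 𝒜 × Finset ℬ → ℝ :=
    fun R => ∑ b' ∈ B', if (R.2 ∩ extNe B i b').Nonempty then (1:ℝ) else 0 with hFBdef
  have expandA : ∑ a' ∈ A', rectProb σ (fun R => (R.1 ∩ extNe A i a').Nonempty)
      = ∑ R, σ.prob R * FA R := by
    unfold rectProb
    rw [Finset.sum_comm]
    refine Finset.sum_congr rfl fun R _ => ?_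
    rw [hFAdef, Finset.mul_sum]
    refine Finset.sum_congr rfl fun a' _ => ?_
    by_cases hc : (R.1 ∩ extNe A i a').Nonempty <;> simp [hc]
  have expandB : ∑ b' ∈ B', rectProb σ (fun R => (R.2 ∩ extNe B i b').Nonempty)
      = ∑ R, σ.prob R * FB R := by
    unfold rectProb
    rw [Finset.sum_comm]
    refine Finset.sum_congr rfl fun R _ => ?_
    rw [hFBdef, Finset.mul_sum]
    refine Finset.sum_congr rfl fun b' _ => ?_
    by_cases hc : (R.2 ∩ extNe B i b').Nonempty <;> simp [hc]
  have claim1 : (1 - δ) * (A'.card : ℝ) ≤ ∑ R, σ.prob R * FA R := by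
    rw [← expandA]
    calc (1 - δ) * (A'.card : ℝ) = ∑ _a' ∈ A', (1 - δ) := by
          rw [Finset.sum_const, nsmul_eq_mul, mul_comm]
      _ ≤ _ := Finset.sum_le_sum hhitA
  have claim2 : (1 - δ) * (B'.card : ℝ) ≤ ∑ R, σ.prob R * FB R := by
    rw [← expandB]
    calc (1 - δ) * (B'.card : ℝ) = ∑ _b' ∈ B', (1 - δ) := by
          rw [Finset.sum_const, nsmul_eq_mul, mul_comm]
      _ ≤ _ := Finset.sum_le_sum hhitB
  have hEsum : 2 - 2*δ ≤ ∑ R, σ.prob R * (FA R / (A'.card : ℝ) + FB R / (B'.card : ℝ)) := by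
    have hsplit : ∑ R, σ.prob R * (FA R / (A'.card : ℝ) + FB R / (B'.card : ℝ))
        = (∑ R, σ.prob R * FA R) / (A'.card : ℝ) + (∑ R, σ.prob R * FB R) / (B'.card : ℝ) := by
      rw [Finset.sum_div, Finset.sum_div, ← Finset.sum_add_distrib]
      refine Finset.sum_congr rfl fun R _ => ?_
      ring
    rw [hsplit]
    have h1 : 1 - δ ≤ (∑ R, σ.prob R * FA R) / (A'.card : ℝ) := by
      rw [le_div_iff₀ ha0]; exact claim1
    have h2 : 1 - δ ≤ (∑ R, σ.prob R * FB R) / (B'.card : ℝ) := by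
      rw [le_div_iff₀ hb0]; exact claim2
    linarith
  have hex : ∃ R, σ.prob R ≠ 0 ∧ 2 - 3*δ ≤ FA R / (A'.card : ℝ) + FB R / (B'.card : ℝ) := by
    by_contra hcon
    push_neg at hcon
    have hle : ∑ R, σ.prob R * (FA R / (A'.card : ℝ) + FB R / (B'.card : ℝ))
        ≤ ∑ R : Finset 𝒜 × Finset ℬ, σ.prob R * (2 - 3*δ) := by
      refine Finset.sum_le_sum fun R _ => ?_
      rcases eq_or_ne (σ.prob R) 0 with h0 | h0
      · simp [h0]
      · exact mul_le_mul_of_nonneg_left (hcon R h0).le (σ.nonneg R)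
    rw [← Finset.sum_mul, σ.sum_one, one_mul] at hle
    linarith
  obtain ⟨R, hR0, hRgood⟩ := hex
  have hFAle : FA R ≤ (A'.card : ℝ) := by
    rw [hFAdef]
    calc (∑ a' ∈ A', if (R.1 ∩ extNe A i a').Nonempty then (1:ℝ) else 0)
        ≤ ∑ _a' ∈ A', (1:ℝ) := by
          refine Finset.sum_le_sum fun a' _ => ?_
          split_ifs <;> norm_num
      _ = (A'.card : ℝ) := by rw [Finset.sum_const, nsmul_eq_mul, mul_one]
  have hFBle : FB R ≤ (B'.card : ℝ) := by
    rw [hFBdef]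
    calc (∑ b' ∈ B', if (R.2 ∩ extNe B i b').Nonempty then (1:ℝ) else 0)
        ≤ ∑ _b' ∈ B', (1:ℝ) := by
          refine Finset.sum_le_sum fun b' _ => ?_
          split_ifs <;> norm_num
      _ = (B'.card : ℝ) := by rw [Finset.sum_const, nsmul_eq_mul, mul_one]
  have hFBr : FB R / (B'.card : ℝ) ≤ 1 := by rw [div_le_one hb0]; exact hFBle
  have hFAr : FA R / (A'.card : ℝ) ≤ 1 := by rw [div_le_one ha0]; exact hFAle
  have hFA : (1 - 3*δ) * (A'.card : ℝ) ≤ FA R := by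
    have : 1 - 3*δ ≤ FA R / (A'.card : ℝ) := by linarith
    rwa [le_div_iff₀ ha0] at this
  have hFB : (1 - 3*δ) * (B'.card : ℝ) ≤ FB R := by
    have : 1 - 3*δ ≤ FB R / (B'.card : ℝ) := by linarith
    rwa [le_div_iff₀ hb0] at this
  -- connect FA/FB to projection cardinalities
  have hcardA : ((projNe (A.filter fun x => x i ∈ R.1) i).card : ℝ) = FA R := by
    rw [projNe_filter_eq]
    simp only [hFAdef]
    rw [Finset.sum_boole]
  have hcardB : ((projNe (B.filter fun x => x i ∈ R.2) i).card : ℝ) = FB R := by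
    rw [projNe_filter_eq]
    simp only [hFBdef]
    rw [Finset.sum_boole]
  refine ⟨R.1, R.2, fun u hu v hv => hσmono R hR0 u hu v hv,
    thick_proj_filter hAth i R.1, thick_proj_filter hBth i R.2, ?_, ?_⟩
  · -- A density
    rw [hcardA]
    have hdeg' : (A.card : ℝ) ≤ φ * (Fintype.card 𝒜 : ℝ) * (A'.card : ℝ) := by
      rw [div_le_iff₀ ha0] at hdeg
      exact hdeg
    have key : (1 - 3*δ) * (A.card : ℝ) ≤ φ * (Fintype.card 𝒜 : ℝ) * FA R := by
      rcases le_or_gt 0 (1 - 3*δ) with hsgn | hsgn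
      · calc (1 - 3*δ) * (A.card : ℝ) ≤ (1 - 3*δ) * (φ * (Fintype.card 𝒜 : ℝ) * (A'.card : ℝ)) :=
              mul_le_mul_of_nonneg_left hdeg' hsgn
          _ = φ * (Fintype.card 𝒜 : ℝ) * ((1 - 3*δ) * (A'.card : ℝ)) := by ring
          _ ≤ φ * (Fintype.card 𝒜 : ℝ) * FA R := by
              refine mul_le_mul_of_nonneg_left hFA (by positivity)
      · have h1 : (1 - 3*δ) * (A.card : ℝ) ≤ 0 :=
          mul_nonpos_of_nonpos_of_nonneg hsgn.le (by positivity)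
        have h2 : (0:ℝ) ≤ φ * (Fintype.card 𝒜 : ℝ) * FA R := by
          have : (0:ℝ) ≤ FA R := by
            rw [hFAdef]
            refine Finset.sum_nonneg fun a' _ => ?_
            split_ifs <;> norm_num
          positivity
        linarith
    have hpow : (Fintype.card 𝒜 : ℝ)^p = (Fintype.card 𝒜 : ℝ)^(p-1) * (Fintype.card 𝒜 : ℝ) := by
      rw [← pow_succ]
      congr 1
      omega
    rw [hpow]
    have hX0 : (0:ℝ) < (Fintype.card 𝒜 : ℝ)^(p-1) := by positivity
    calc (1/φ) * (1 - 3*δ) * ((A.card : ℝ) / ((Fintype.card 𝒜 : ℝ)^(p-1) * (Fintype.card 𝒜 : ℝ)))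
        = ((1 - 3*δ) * (A.card : ℝ)) / (φ * ((Fintype.card 𝒜 : ℝ)^(p-1) * (Fintype.card 𝒜 : ℝ))) := by
          field_simp
          try ring
      _ ≤ (φ * (Fintype.card 𝒜 : ℝ) * FA R) / (φ * ((Fintype.card 𝒜 : ℝ)^(p-1) * (Fintype.card 𝒜 : ℝ))) := by
          exact (div_le_div_iff_of_pos_right (by positivity)).mpr key
      _ = FA R / (Fintype.card 𝒜 : ℝ)^(p-1) := by
          field_simp
          try ring
  · -- B density
    rw [hcardB]
    have hBle : (B.card : ℝ) ≤ (B'.card : ℝ) * (Fintype.card ℬ : ℝ) := by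
      exact_mod_cast card_le_projNe_mul B i
    have key : (1 - 3*δ) * (B.card : ℝ) ≤ (Fintype.card ℬ : ℝ) * FB R := by
      rcases le_or_gt 0 (1 - 3*δ) with hsgn | hsgn
      · calc (1 - 3*δ) * (B.card : ℝ) ≤ (1 - 3*δ) * ((B'.card : ℝ) * (Fintype.card ℬ : ℝ)) :=
              mul_le_mul_of_nonneg_left hBle hsgn
          _ = (Fintype.card ℬ : ℝ) * ((1 - 3*δ) * (B'.card : ℝ)) := by ring
          _ ≤ (Fintype.card ℬ : ℝ) * FB R := mul_le_mul_of_nonneg_left hFB cB0.le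
      · have h1 : (1 - 3*δ) * (B.card : ℝ) ≤ 0 :=
          mul_nonpos_of_nonpos_of_nonneg hsgn.le (by positivity)
        have h2 : (0:ℝ) ≤ (Fintype.card ℬ : ℝ) * FB R := by
          have : (0:ℝ) ≤ FB R := by
            rw [hFBdef]
            refine Finset.sum_nonneg fun b' _ => ?_
            split_ifs <;> norm_num
          positivity
        linarith
    have hpow : (Fintype.card ℬ : ℝ)^p = (Fintype.card ℬ : ℝ)^(p-1) * (Fintype.card ℬ : ℝ) := by
      rw [← pow_succ]
      congr 1
      omega
    rw [hpow]
    have hX0 : (0:ℝ) < (Fintype.card ℬ : ℝ)^(p-1) := by positivity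
    calc (1 - 3*δ) * ((B.card : ℝ) / ((Fintype.card ℬ : ℝ)^(p-1) * (Fintype.card ℬ : ℝ)))
        = ((1 - 3*δ) * (B.card : ℝ)) / ((Fintype.card ℬ : ℝ)^(p-1) * (Fintype.card ℬ : ℝ)) := by
          ring
      _ ≤ ((Fintype.card ℬ : ℝ) * FB R) / ((Fintype.card ℬ : ℝ)^(p-1) * (Fintype.card ℬ : ℝ)) := by
          exact (div_le_div_iff_of_pos_right (by positivity)).mpr key
      _ = FB R / (Fintype.card ℬ : ℝ)^(p-1) := by
          field_simp
          try ring
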